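/- Let X be a real infinite-dimensional Banach space with a shrinking Schauder basis (x_n)_{n=1}^∞ with basis constant K. Then wck_X(B_X) ≤ (K+1)²·bc₂((x_n)). -/

import Mathlib

open Filter Metric NormedSpace Set Topology

noncomputable section

variable {E : Type*} [NormedAddCommGroup E] [NormedSpace ℝ E]

/-- `f` is the sequence of coordinate functionals of the Schauder basis `x`:
every vector has an expansion along `x`, and such expansions are unique. -/
structure IsSchauderBasis (x : ℕ → E) (f : ℕ → E →L[ℝ] ℝ) : Prop where
  expand : ∀ v : E,
    Tendsto (fun n => ∑ i ∈ Finset.range n, f i v • x i) atTop (𝓝 v)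
  unique : ∀ (a : ℕ → ℝ) (v : E),
    Tendsto (fun n => ∑ i ∈ Finset.range n, a i • x i) atTop (𝓝 v) → ∀ i, a i = f i v

/-- the `n`-th basis projection `P_n`. -/
def basisProj (x : ℕ → E) (f : ℕ → E →L[ℝ] ℝ) (n : ℕ) : E →L[ℝ] E :=
  ∑ i ∈ Finset.range n, (f i).smulRight (x i)

/-- closed linear span of `{y i : i ≥ n}`. -/
def tailSpan (y : ℕ → E) (n : ℕ) : Submodule ℝ E :=
  (Submodule.span ℝ (y '' {i | n ≤ i})).topologicalClosure

/-- `‖g‖_n` : the norm of the restriction of `g` to the closed span of the tail of `y`. -/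
def tailNorm (y : ℕ → E) (g : E →L[ℝ] ℝ) (n : ℕ) : ℝ :=
  ‖g.comp (tailSpan y n).subtypeL‖

/-- the quantity `sh` measuring how far a basic sequence is from being shrinking. -/
def sh (y : ℕ → E) : ℝ :=
  sSup ((fun g : E →L[ℝ] ℝ => limsup (tailNorm y g) atTop) '' {g | ‖g‖ ≤ 1})

/-- non-symmetrised Hausdorff distance `d̂(A,B)`. -/
def hdist (A B : Set E) : ℝ := sSup ((fun a => infDist a B) '' A)

/-- ordinary distance between two sets. -/
def setDist (A B : Set E) : ℝ := sInf {d : ℝ | ∃ a ∈ A, ∃ b ∈ B, d = dist a b}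

/-- `ca` measures how far a sequence is from being norm-Cauchy. -/
def ca (z : ℕ → E) : ℝ :=
  ⨅ n : ℕ, sSup {d : ℝ | ∃ k, n ≤ k ∧ ∃ l, n ≤ l ∧ d = ‖z k - z l‖}

/-- measure of non-separability. -/
def sep (A : Set E) : ℝ :=
  sInf {ε : ℝ | 0 < ε ∧ ∃ C : Set E, C.Countable ∧ ∀ a ∈ A, ∃ c ∈ C, ‖a - c‖ ≤ ε}

/-- `V`: the closed linear span of the coordinate functionals. -/
def dualSpan (g : ℕ → E →L[ℝ] ℝ) : Submodule ℝ (StrongDual ℝ E) :=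
  (Submodule.span ℝ (Set.range g)).topologicalClosure

lemma mem_dualSpan (g : ℕ → E →L[ℝ] ℝ) (i : ℕ) : g i ∈ dualSpan g :=
  Submodule.le_topologicalClosure _ (Submodule.subset_span ⟨i, rfl⟩)

/-- the quantity `bc₁` measuring non-bounded-completeness. -/
def bc1 (y : ℕ → E) : ℝ :=
  sSup {c : ℝ | ∃ a : ℕ → ℝ,
    (∀ n, ‖∑ i ∈ Finset.range n, a i • y i‖ ≤ 1) ∧
    c = ca (fun n => ∑ i ∈ Finset.range n, a i • y i)}

/-- the quantity `bc₂`. -/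
def bc2 (y : ℕ → E) (g : ℕ → E →L[ℝ] ℝ) : ℝ :=
  sSup {c : ℝ | ∃ φ : ↥(dualSpan g) →L[ℝ] ℝ,
    @Norm.norm _ (@ContinuousLinearMap.hasOpNorm ℝ ℝ (dualSpan g) ℝ _ _ _ _ _ _ _) φ ≤ 1 ∧
    c = ca (fun n => ∑ i ∈ Finset.range n, φ ⟨g i, mem_dualSpan g i⟩ • y i)}

/-- the quantity `bc₃`. -/
def bc3 (y : ℕ → E) (g : ℕ → E →L[ℝ] ℝ) : ℝ :=
  sSup {c : ℝ | ∃ Φ : StrongDual ℝ (StrongDual ℝ E), ‖Φ‖ ≤ 1 ∧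
    c = ca (fun n => ∑ i ∈ Finset.range n, Φ (g i) • y i)}

/-- `α_Y(X)`: measures how well `Y` embeds isomorphically into `X`. -/
def alpha (Y X : Type*) [NormedAddCommGroup Y] [NormedSpace ℝ Y]
    [NormedAddCommGroup X] [NormedSpace ℝ X] : ℝ :=
  sSup {c : ℝ | ∃ T : Y →L[ℝ] X, ‖T‖ ≤ 1 ∧ ∀ y : Y, c * ‖y‖ ≤ ‖T y‖}

/-- `β_Y(X)`: measures how well `Y` embeds complementably into `X`. -/
def beta (Y X : Type*) [NormedAddCommGroup Y] [NormedSpace ℝ Y]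
    [NormedAddCommGroup X] [NormedSpace ℝ X] : ℝ :=
  sSup {c : ℝ | ∃ (A : X →L[ℝ] Y) (B : Y →L[ℝ] X),
    A.comp B = ContinuousLinearMap.id ℝ Y ∧ c * (‖A‖ * ‖B‖) ≤ 1}

/-- weak-star closure of a subset of the bidual. -/
def wstarClosure {X : Type*} [NormedAddCommGroup X] [NormedSpace ℝ X]
    (S : Set (StrongDual ℝ (StrongDual ℝ X))) : Set (StrongDual ℝ (StrongDual ℝ X)) :=
  {z | StrongDual.toWeakDual z ∈ closure (StrongDual.toWeakDual '' S)}

/-- the measure of weak non-compactness `wk_X(A)`. -/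
def wk (X : Type*) [NormedAddCommGroup X] [NormedSpace ℝ X] (A : Set X) : ℝ :=
  hdist (wstarClosure ((inclusionInDoubleDual ℝ X) '' A))
    (Set.range (inclusionInDoubleDual ℝ X))

/-- weak-star cluster points in the bidual of a sequence in `X`. -/
def wclust {X : Type*} [NormedAddCommGroup X] [NormedSpace ℝ X] (u : ℕ → X) :
    Set (StrongDual ℝ (StrongDual ℝ X)) :=
  {z | MapClusterPt (StrongDual.toWeakDual z) atTop
      (fun n => StrongDual.toWeakDual (inclusionInDoubleDual ℝ X (u n)))}

/-- the measure of weak non-compactness `wck_X(A)`. -/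
def wck (X : Type*) [NormedAddCommGroup X] [NormedSpace ℝ X] (A : Set X) : ℝ :=
  sSup {c : ℝ | ∃ u : ℕ → X, (∀ n, u n ∈ A) ∧
    c = setDist (wclust u) (Set.range (inclusionInDoubleDual ℝ X))}


/-- the canonical map `j : X → V*` for a subspace `V` of the dual,
`⟨j v, x*⟩ = x*(v)`. -/
def jfun {X : Type*} [NormedAddCommGroup X] [NormedSpace ℝ X]
    (V : Submodule ℝ (StrongDual ℝ X)) (v : X) : ↥V →L[ℝ] ℝ :=
  (inclusionInDoubleDual ℝ X v).comp V.subtypeL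

/-- the space `ℓ₁` of absolutely summable real sequences. -/
abbrev ell1 : Type := lp (fun _ : ℕ => ℝ) 1

/-- the space `c₀` of real sequences converging to zero, with the sup norm. -/
abbrev czero : Type := ZeroAtInftyContinuousMap ℕ ℝ

end


section AuxShr

variable {X : Type*} [NormedAddCommGroup X] [NormedSpace ℝ X]

lemma basisProj_apply (x : ℕ → X) (f : ℕ → X →L[ℝ] ℝ) (n : ℕ) (v : X) :
    basisProj x f n v = ∑ i ∈ Finset.range n, f i v • x i := by
  simp [basisProj, ContinuousLinearMap.sum_apply]

lemma basis_delta {x : ℕ → X} {f : ℕ → X →L[ℝ] ℝ} (hb : IsSchauderBasis x f)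
    (j i : ℕ) : f j (x i) = if j = i then 1 else 0 := by
  refine (hb.unique (fun j => if j = i then (1:ℝ) else 0) (x i) ?_ j).symm
  apply tendsto_atTop_of_eventually_const (i₀ := i + 1)
  intro n hn
  have h1 : ∀ j : ℕ, (if j = i then (1:ℝ) else 0) • x j = if j = i then x j else 0 := by
    intro j; split <;> simp
  simp only [h1]
  rw [Finset.sum_ite_eq' (Finset.range n) i x, if_pos (Finset.mem_range.mpr (by omega))]

lemma comp_proj (x : ℕ → X) (f : ℕ → X →L[ℝ] ℝ) (g : X →L[ℝ] ℝ) (k : ℕ) :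
    g.comp (basisProj x f k) = ∑ i ∈ Finset.range k, g (x i) • f i := by
  ext v
  simp [ContinuousLinearMap.comp_apply, basisProj_apply, ContinuousLinearMap.sum_apply,
    map_sum, smul_eq_mul, mul_comm]

lemma key_eval (x : ℕ → X) (f : ℕ → X →L[ℝ] ℝ) (w : StrongDual ℝ (StrongDual ℝ X))
    (g : X →L[ℝ] ℝ) (k : ℕ) :
    w (g.comp (basisProj x f k)) = g (∑ i ∈ Finset.range k, w (f i) • x i) := by
  rw [comp_proj, map_sum, map_sum]
  simp [smul_eq_mul, mul_comm]

lemma proj_basis {x : ℕ → X} {f : ℕ → X →L[ℝ] ℝ} (hb : IsSchauderBasis x f)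
    (N i : ℕ) : basisProj x f N (x i) = if i ∈ Finset.range N then x i else 0 := by
  rw [basisProj_apply, ← Finset.sum_ite_eq' (Finset.range N) i x]
  refine Finset.sum_congr rfl fun j _ => ?_
  rw [basis_delta hb]
  split <;> simp [*]

lemma proj_sum {x : ℕ → X} {f : ℕ → X →L[ℝ] ℝ} (hb : IsSchauderBasis x f)
    (c : ℕ → ℝ) {N k : ℕ} (h : N ≤ k) :
    basisProj x f N (∑ i ∈ Finset.range k, c i • x i)
      = ∑ i ∈ Finset.range N, c i • x i := by
  rw [map_sum]
  have h1 : ∀ i ∈ Finset.range k, basisProj x f N (c i • x i)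
      = if i ∈ Finset.range N then c i • x i else 0 := by
    intro i _
    rw [map_smul, proj_basis hb]
    split <;> simp
  rw [Finset.sum_congr rfl h1, Finset.sum_ite_mem,
    Finset.inter_eq_right.mpr (Finset.range_subset_range.mpr h)]

lemma span_fix {x : ℕ → X} {f : ℕ → X →L[ℝ] ℝ} (hb : IsSchauderBasis x f)
    {h' : X →L[ℝ] ℝ} (hmem : h' ∈ Submodule.span ℝ (Set.range f)) :
    ∃ m, ∀ k, m ≤ k → h'.comp (basisProj x f k) = h' := by
  induction hmem using Submodule.span_induction with
  | mem g hg =>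
    obtain ⟨i, rfl⟩ := hg
    refine ⟨i + 1, fun k hk => ?_⟩
    ext v
    simp only [ContinuousLinearMap.comp_apply, basisProj_apply, map_sum, map_smul,
      smul_eq_mul]
    have : ∀ j ∈ Finset.range k, f j v * f i (x j) = if i = j then f j v else 0 := by
      intro j _
      rw [basis_delta hb]
      split <;> simp [*]
    rw [Finset.sum_congr rfl this, Finset.sum_ite_eq (Finset.range k) i,
      if_pos (Finset.mem_range.mpr (by omega))]
  | zero => exact ⟨0, fun k _ => by simp⟩
  | add g₁ g₂ _ _ ih1 ih2 =>
    obtain ⟨m1, hm1⟩ := ih1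
    obtain ⟨m2, hm2⟩ := ih2
    exact ⟨max m1 m2, fun k hk => by
      rw [ContinuousLinearMap.add_comp, hm1 k (le_trans (le_max_left _ _) hk),
        hm2 k (le_trans (le_max_right _ _) hk)]⟩
  | smul a g _ ih =>
    obtain ⟨m, hm⟩ := ih
    exact ⟨m, fun k hk => by
      rw [ContinuousLinearMap.smul_comp, hm k hk]⟩

lemma shrinking_approx {x : ℕ → X} {f : ℕ → X →L[ℝ] ℝ} (hb : IsSchauderBasis x f)
    (hshr : dualSpan f = ⊤) {K' : ℝ} (hK' : ∀ n, ‖basisProj x f n‖ ≤ K')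
    (h : X →L[ℝ] ℝ) (N : ℕ) {δ : ℝ} (hδ : 0 < δ) :
    ∃ k, N ≤ k ∧ ‖h.comp (basisProj x f k) - h‖ ≤ δ := by
  have hK'0 : 0 ≤ K' := le_trans (norm_nonneg _) (hK' 0)
  have hmem : h ∈ closure ((Submodule.span ℝ (Set.range f) : Submodule ℝ (StrongDual ℝ X)) : Set (StrongDual ℝ X)) := by
    have : h ∈ dualSpan f := by rw [hshr]; trivial
    exact this
  have hη : 0 < δ / (K' + 2) := by positivity
  obtain ⟨h', hh'mem, hh'⟩ := Metric.mem_closure_iff.mp hmem _ hη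
  rw [dist_eq_norm] at hh'
  obtain ⟨m, hm⟩ := span_fix hb hh'mem
  refine ⟨max m N, le_max_right _ _, ?_⟩
  have e1 : h.comp (basisProj x f (max m N)) - h
      = (h - h').comp (basisProj x f (max m N)) + (h' - h) := by
    rw [ContinuousLinearMap.sub_comp, hm _ (le_max_left _ _)]
    abel
  rw [e1]
  have e2 : ‖(h - h').comp (basisProj x f (max m N))‖ ≤ ‖h - h'‖ * K' := by
    calc ‖(h - h').comp (basisProj x f (max m N))‖
        ≤ ‖h - h'‖ * ‖basisProj x f (max m N)‖ := ContinuousLinearMap.opNorm_comp_le _ _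
      _ ≤ ‖h - h'‖ * K' := mul_le_mul_of_nonneg_left (hK' _) (norm_nonneg _)
  have e3 : ‖h' - h‖ = ‖h - h'‖ := norm_sub_rev _ _
  have hpos : (0:ℝ) < K' + 2 := by linarith
  have hd : δ / (K' + 2) * (K' + 2) = δ := div_mul_cancel₀ δ (ne_of_gt hpos)
  calc ‖(h - h').comp (basisProj x f (max m N)) + (h' - h)‖
      ≤ ‖(h - h').comp (basisProj x f (max m N))‖ + ‖h' - h‖ := norm_add_le _ _
    _ ≤ ‖h - h'‖ * K' + ‖h - h'‖ := by rw [e3]; exact add_le_add e2 le_rfl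
    _ ≤ δ := by
        nlinarith [mul_le_mul_of_nonneg_right hh'.le (show (0:ℝ) ≤ K' + 1 by linarith),
          hη.le]

end AuxShr

set_option maxHeartbeats 1000000 in
/-- Theorem 5.2(2): if the basis is shrinking (`V = X*`) then
`wck_X(B_X) ≤ (K+1)²·bc₂((xₙ))`. -/
theorem wck_le_bc2_of_shrinking {X : Type*} [NormedAddCommGroup X]
    [NormedSpace ℝ X] [CompleteSpace X] (hinf : ¬ FiniteDimensional ℝ X)
    (x : ℕ → X) (f : ℕ → X →L[ℝ] ℝ) (hb : IsSchauderBasis x f)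
    (K : ℝ) (hK : K = ⨆ n : ℕ, ‖basisProj x f n‖)
    (hshr : dualSpan f = ⊤) :
    wck X (Metric.closedBall (0 : X) 1) ≤ (K + 1) ^ 2 * bc2 x f := by
  classical
  -- uniform bound on the basis projections (Banach–Steinhaus)
  obtain ⟨K', hK'⟩ : ∃ C, ∀ n, ‖basisProj x f n‖ ≤ C := by
    apply banach_steinhaus
    intro v
    have hbd : BddAbove (Set.range fun n => ‖∑ i ∈ Finset.range n, f i v • x i‖) :=
      (hb.expand v).norm.bddAbove_range
    obtain ⟨C, hC⟩ := hbd
    refine ⟨C, fun n => ?_⟩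
    rw [basisProj_apply]
    exact hC ⟨n, rfl⟩
  have hK'0 : 0 ≤ K' := le_trans (norm_nonneg _) (hK' 0)
  have hK0 : 0 ≤ K := by rw [hK]; exact Real.iSup_nonneg fun n => norm_nonneg _
  set J := inclusionInDoubleDual ℝ X with hJ
  -- bound on the partial sums associated to a norm-one functional on the bidual
  have hsbound : ∀ w : StrongDual ℝ (StrongDual ℝ X), ‖w‖ ≤ 1 → ∀ n,
      ‖∑ i ∈ Finset.range n, w (f i) • x i‖ ≤ K' := by
    intro w hw n
    refine NormedSpace.norm_le_dual_bound ℝ _ hK'0 fun g => ?_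
    rw [← key_eval x f w g n]
    calc ‖w (g.comp (basisProj x f n))‖ ≤ ‖w‖ * ‖g.comp (basisProj x f n)‖ :=
        w.le_opNorm _
      _ ≤ 1 * (‖g‖ * ‖basisProj x f n‖) :=
        mul_le_mul hw (ContinuousLinearMap.opNorm_comp_le _ _) (norm_nonneg _) zero_le_one
      _ ≤ 1 * (‖g‖ * K') := by
          have := mul_le_mul_of_nonneg_left (hK' n) (norm_nonneg g)
          linarith
      _ = K' * ‖g‖ := by ring
  -- generic facts about `ca` of a `K'`-bounded sequence
  have hca : ∀ s : ℕ → X, (∀ n, ‖s n‖ ≤ K') →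
      0 ≤ ca s ∧ ca s ≤ 2 * K' ∧
      ∀ ε > 0, ∃ N, ∀ k, N ≤ k → ‖s k - s N‖ ≤ ca s + ε := by
    intro s hs
    set S : ℕ → ℝ := fun n => sSup {d : ℝ | ∃ k, n ≤ k ∧ ∃ l, n ≤ l ∧ d = ‖s k - s l‖}
      with hSdef
    have hcaeq : ca s = ⨅ n, S n := rfl
    have hub : ∀ n, ∀ d ∈ {d : ℝ | ∃ k, n ≤ k ∧ ∃ l, n ≤ l ∧ d = ‖s k - s l‖},
        d ≤ 2 * K' := by
      rintro n d ⟨k, hk, l, hl, rfl⟩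
      calc ‖s k - s l‖ ≤ ‖s k‖ + ‖s l‖ := norm_sub_le _ _
        _ ≤ 2 * K' := by have := hs k; have := hs l; linarith
    have hbdd : ∀ n, BddAbove {d : ℝ | ∃ k, n ≤ k ∧ ∃ l, n ≤ l ∧ d = ‖s k - s l‖} :=
      fun n => ⟨2 * K', hub n⟩
    have hmem0 : ∀ n, (0:ℝ) ∈ {d : ℝ | ∃ k, n ≤ k ∧ ∃ l, n ≤ l ∧ d = ‖s k - s l‖} :=
      fun n => ⟨n, le_rfl, n, le_rfl, by simp⟩
    have hSnn : ∀ n, 0 ≤ S n := fun n => le_csSup (hbdd n) (hmem0 n)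
    have hbddb : BddBelow (Set.range S) := ⟨0, by rintro r ⟨n, rfl⟩; exact hSnn n⟩
    have hca0 : 0 ≤ ca s := by rw [hcaeq]; exact le_ciInf hSnn
    have hcaS : ca s ≤ S 0 := by rw [hcaeq]; exact ciInf_le hbddb 0
    have hS0 : S 0 ≤ 2 * K' := csSup_le ⟨0, hmem0 0⟩ (hub 0)
    refine ⟨hca0, hcaS.trans hS0, fun ε hε => ?_⟩
    have hlt : (⨅ n, S n) < ca s + ε := by rw [← hcaeq]; linarith
    obtain ⟨N, hN⟩ := exists_lt_of_ciInf_lt hlt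
    refine ⟨N, fun k hk => ?_⟩
    exact (le_csSup (hbdd N) ⟨k, hk, N, le_rfl, rfl⟩).trans hN.le
  -- BddAbove of the `bc2` set
  have hbc2bdd : BddAbove {c : ℝ | ∃ φ : ↥(dualSpan f) →L[ℝ] ℝ,
      @Norm.norm _ (@ContinuousLinearMap.hasOpNorm ℝ ℝ (dualSpan f) ℝ _ _ _ _ _ _ _) φ ≤ 1 ∧
      c = ca (fun n => ∑ i ∈ Finset.range n, φ ⟨f i, mem_dualSpan f i⟩ • x i)} := by
    refine ⟨2 * K', ?_⟩
    rintro c ⟨φ, hφ, rfl⟩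
    set w : StrongDual ℝ (StrongDual ℝ X) :=
      φ.comp ((ContinuousLinearMap.id ℝ (StrongDual ℝ X)).codRestrict (dualSpan f)
        (fun g => by rw [hshr]; trivial)) with hwdef
    have hwn : ‖w‖ ≤ 1 := by
      refine ContinuousLinearMap.opNorm_le_bound _ zero_le_one fun g => ?_
      rw [one_mul]
      calc ‖w g‖ ≤ @Norm.norm _ (@ContinuousLinearMap.hasOpNorm ℝ ℝ (dualSpan f) ℝ _ _ _ _ _ _ _) φ * ‖(⟨g, by rw [hshr]; trivial⟩ : ↥(dualSpan f))‖ := @ContinuousLinearMap.le_opNorm ℝ ℝ (dualSpan f) ℝ _ _ _ _ _ _ _ _ φ _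
        _ ≤ 1 * ‖g‖ := mul_le_mul_of_nonneg_right hφ (norm_nonneg (E := ↥(dualSpan f)) _)
        _ = ‖g‖ := one_mul _
    have hseq : (fun n => ∑ i ∈ Finset.range n, φ ⟨f i, mem_dualSpan f i⟩ • x i)
        = fun n => ∑ i ∈ Finset.range n, w (f i) • x i := rfl
    rw [hseq]
    exact ((hca _ (hsbound w hwn)).2).1
  -- `bc2` is nonnegative
  have hbc20 : 0 ≤ bc2 x f := by
    refine le_csSup hbc2bdd ⟨0, le_of_eq_of_le ContinuousLinearMap.opNorm_zero zero_le_one, ?_⟩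
    have h1 : (fun n => ∑ i ∈ Finset.range n,
        ((0 : ↥(dualSpan f) →L[ℝ] ℝ) ⟨f i, mem_dualSpan f i⟩) • x i)
        = fun _ : ℕ => (0:X) := by
      funext n; simp
    rw [h1]
    have h2 : ∀ n : ℕ, {d : ℝ | ∃ k, n ≤ k ∧ ∃ l, n ≤ l ∧ d = ‖(0:X) - 0‖} = {(0:ℝ)} := by
      intro n
      ext d
      constructor
      · rintro ⟨k, _, l, _, rfl⟩; simp
      · rintro rfl; exact ⟨n, le_rfl, n, le_rfl, by simp⟩
    have h3 : ca (fun _ : ℕ => (0:X)) = 0 := by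
      unfold ca
      simp only [h2, csSup_singleton, ciInf_const]
    exact h3.symm
  have hRHS0 : 0 ≤ (K + 1) ^ 2 * bc2 x f := mul_nonneg (sq_nonneg _) hbc20
  refine Real.sSup_le ?_ hRHS0
  rintro c ⟨u, hu, rfl⟩
  have hu1 : ∀ n, ‖u n‖ ≤ 1 := fun n => by
    have := hu n; rwa [Metric.mem_closedBall, dist_zero_right] at this
  by_cases hne : (wclust u).Nonempty
  · obtain ⟨z, hz⟩ := hne
    -- the cluster point has norm at most one
    have hz1 : ‖z‖ ≤ 1 := by
      refine ContinuousLinearMap.opNorm_le_bound _ zero_le_one fun g => ?_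
      rw [one_mul]
      have hev : ContinuousAt (fun w : WeakDual ℝ (StrongDual ℝ X) => w g)
          (StrongDual.toWeakDual z) := (WeakDual.eval_continuous g).continuousAt
      have hcomp : (fun w : WeakDual ℝ (StrongDual ℝ X) => w g) ∘
          (fun n => StrongDual.toWeakDual (J (u n))) = fun n => g (u n) := rfl
      have hcl : ClusterPt (z g) (Filter.map (fun n => g (u n)) atTop) := by
        have h1 : ClusterPt (StrongDual.toWeakDual z)
            (Filter.map (fun n => StrongDual.toWeakDual (J (u n))) atTop) := hz
        have h2 := h1.map hev (le_of_eq (Filter.map_map.trans (by rw [hcomp])))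
        exact h2
      have hmem : Filter.map (fun n => g (u n)) atTop ≤
          𝓟 (Metric.closedBall (0:ℝ) ‖g‖) := by
        rw [Filter.le_principal_iff, Filter.mem_map]
        refine Filter.Eventually.of_forall fun n => ?_
        simp only [Set.mem_preimage, Metric.mem_closedBall, Real.dist_eq, sub_zero]
        calc |g (u n)| = ‖g (u n)‖ := (Real.norm_eq_abs _).symm
          _ ≤ ‖g‖ * ‖u n‖ := g.le_opNorm _
          _ ≤ ‖g‖ * 1 := mul_le_mul_of_nonneg_left (hu1 n) (norm_nonneg _)
          _ = ‖g‖ := mul_one _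
      have hball : z g ∈ Metric.closedBall (0:ℝ) ‖g‖ := by
        have hcc := mem_closure_iff_clusterPt.mpr (hcl.mono hmem)
        rwa [Metric.isClosed_closedBall.closure_eq] at hcc
      rw [Metric.mem_closedBall, Real.dist_eq, sub_zero] at hball
      rwa [Real.norm_eq_abs]
    set s : ℕ → X := fun n => ∑ i ∈ Finset.range n, z (f i) • x i with hsdef
    have hsb : ∀ n, ‖s n‖ ≤ K' := hsbound z hz1
    obtain ⟨hca0, _, hcaN⟩ := hca s hsb
    -- `ca s ≤ bc2`
    have hcbc2 : ca s ≤ bc2 x f := by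
      refine le_csSup hbc2bdd ⟨z.comp (dualSpan f).subtypeL, ?_, rfl⟩
      refine ContinuousLinearMap.opNorm_le_bound _ zero_le_one fun v => ?_
      rw [one_mul]
      calc ‖z ((dualSpan f).subtypeL v)‖ ≤ ‖z‖ * ‖(dualSpan f).subtypeL v‖ := z.le_opNorm _
        _ ≤ 1 * ‖v‖ := by
            rw [Submodule.subtypeL_apply]
            exact mul_le_mul_of_nonneg_right hz1 (norm_nonneg _)
        _ = ‖v‖ := one_mul _
    -- the distance estimate
    have hdistle : setDist (wclust u) (Set.range J) ≤ ca s := by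
      refine le_of_forall_pos_le_add fun ε hε => ?_
      obtain ⟨N, hN⟩ := hcaN (ε/3) (by linarith)
      have hznorm : ‖z - J (s N)‖ ≤ ca s + ε := by
        refine ContinuousLinearMap.opNorm_le_bound _ (by linarith) fun g => ?_
        rcases eq_or_ne g 0 with rfl | hg0
        · simp
        · have hgpos : 0 < ‖g‖ := norm_pos_iff.mpr hg0
          set h : StrongDual ℝ X := g - g.comp (basisProj x f N) with hhdef
          obtain ⟨k, hkN, hk⟩ := shrinking_approx hb hshr hK' h N
            (show 0 < ε/3*‖g‖ by positivity)
          have e0 : (z - J (s N)) g = z h := by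
            have h1 : J (s N) g = z (g.comp (basisProj x f N)) := by
              rw [hJ, NormedSpace.dual_def]
              exact (key_eval x f z g N).symm
            rw [ContinuousLinearMap.sub_apply, h1, hhdef, map_sub]
          have e1 : z (h.comp (basisProj x f k)) = g (s k) - g (s N) := by
            rw [key_eval x f z h k]
            show h (s k) = _
            rw [hhdef]
            rw [ContinuousLinearMap.sub_apply, ContinuousLinearMap.comp_apply]
            rw [show basisProj x f N (s k) = s N from proj_sum hb _ hkN]
          have e3 : |z (h - h.comp (basisProj x f k))| ≤ ε/3*‖g‖ := by
            calc |z (h - h.comp (basisProj x f k))|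
                ≤ ‖z‖ * ‖h - h.comp (basisProj x f k)‖ := z.le_opNorm _
              _ ≤ 1 * (ε/3*‖g‖) :=
                  mul_le_mul hz1 (by rw [norm_sub_rev]; exact hk) (norm_nonneg _) zero_le_one
              _ = ε/3*‖g‖ := one_mul _
          have e4 : |g (s k) - g (s N)| ≤ (ca s + ε/3) * ‖g‖ := by
            rw [← map_sub]
            calc |g (s k - s N)| ≤ ‖g‖ * ‖s k - s N‖ := g.le_opNorm _
              _ ≤ ‖g‖ * (ca s + ε/3) := mul_le_mul_of_nonneg_left (hN k hkN) (norm_nonneg _)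
              _ = (ca s + ε/3) * ‖g‖ := mul_comm _ _
          have e5 : |z h| ≤ (ca s + ε/3)*‖g‖ + ε/3*‖g‖ := by
            have hsum : z (h.comp (basisProj x f k))
                + (z h - z (h.comp (basisProj x f k))) = z h := by ring
            have habs := abs_add_le (z (h.comp (basisProj x f k)))
              (z h - z (h.comp (basisProj x f k)))
            rw [hsum] at habs
            have hms : z h - z (h.comp (basisProj x f k))
                = z (h - h.comp (basisProj x f k)) := (map_sub z h _).symm
            rw [hms] at habs
            refine habs.trans (add_le_add ?_ e3)
            rw [e1]; exact e4
          calc ‖(z - J (s N)) g‖ = |z h| := by rw [e0, Real.norm_eq_abs]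
            _ ≤ (ca s + ε/3)*‖g‖ + ε/3*‖g‖ := e5
            _ ≤ (ca s + ε) * ‖g‖ := by nlinarith
      have hin : dist z (J (s N)) ∈
          {d : ℝ | ∃ a ∈ wclust u, ∃ b ∈ Set.range J, d = dist a b} :=
        ⟨z, hz, J (s N), ⟨s N, rfl⟩, rfl⟩
      have hlb : BddBelow {d : ℝ | ∃ a ∈ wclust u, ∃ b ∈ Set.range J, d = dist a b} :=
        ⟨0, by rintro d ⟨a, _, b, _, rfl⟩; exact dist_nonneg⟩
      calc setDist (wclust u) (Set.range J) ≤ dist z (J (s N)) := csInf_le hlb hin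
        _ = ‖z - J (s N)‖ := dist_eq_norm (E := StrongDual ℝ (StrongDual ℝ X)) _ _
        _ ≤ ca s + ε := hznorm
    calc setDist (wclust u) (Set.range J) ≤ ca s := hdistle
      _ ≤ bc2 x f := hcbc2
      _ ≤ (K + 1) ^ 2 * bc2 x f := le_mul_of_one_le_left hbc20 (by nlinarith)
  · rw [Set.not_nonempty_iff_eq_empty] at hne
    have hempty : {d : ℝ | ∃ a ∈ wclust u, ∃ b ∈ Set.range J, d = dist a b} = ∅ := by
      simp [hne]
    rw [setDist, hempty, Real.sInf_empty]
    exact hRHS0
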